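/- Fix β₀ ∈ ℝ, σ > 0, a > 1 and b > −(1/2)·log(2πσ²). Let ℓ(z) = exp(−(z−β₀)²/(2σ²))/√(2πσ²) be the Gaussian likelihood at the true parameter, s(z) = (z−β₀)/σ² its score, and w(L) = (a−1)/(b−L) the Gamma-induced weight function (well defined since log ℓ(z) ≤ −(1/2)log(2πσ²) < b for all z). Then w(log ℓ(z))·s(z) → 0 as |z| → ∞; equivalently, the product tends to 0 as ℓ(z) → 0. -/

import Mathlib

open Real Filter

private lemma inv_tendsto_atBot' {f : ℝ → ℝ} {l : Filter ℝ} (h : Tendsto f l atBot) :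
    Tendsto (fun x => (f x)⁻¹) l (nhds 0) := by
  have h2 : Tendsto (fun x => -f x) l atTop := tendsto_neg_atBot_atTop.comp h
  have h3 := h2.inv_tendsto_atTop.neg
  simpa [inv_neg] using h3

theorem stmt_10 (β₀ σ a b : ℝ) (hσ : 0 < σ) (ha : 1 < a)
    (hb : -(1 / 2) * Real.log (2 * Real.pi * σ ^ 2) < b) :
    Filter.Tendsto
      (fun z : ℝ =>
        (a - 1) /
            (b - Real.log (Real.exp (-(z - β₀) ^ 2 / (2 * σ ^ 2)) /
              Real.sqrt (2 * Real.pi * σ ^ 2))) *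
          ((z - β₀) / σ ^ 2))
      (Filter.cocompact ℝ) (nhds 0) := by
  have hS : 0 < 2 * Real.pi * σ ^ 2 := by positivity
  set c : ℝ := b + 1 / 2 * Real.log (2 * Real.pi * σ ^ 2) with hc
  have hcpos : 0 < c := by rw [hc]; linarith
  have hfun : ∀ z : ℝ,
      (a - 1) / (b - Real.log (Real.exp (-(z - β₀) ^ 2 / (2 * σ ^ 2)) /
          Real.sqrt (2 * Real.pi * σ ^ 2))) * ((z - β₀) / σ ^ 2)
        = (a - 1) * ((z - β₀) / σ ^ 2) / (c + (z - β₀) ^ 2 / (2 * σ ^ 2)) := by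
    intro z
    rw [Real.log_div (Real.exp_ne_zero _) (by positivity), Real.log_exp,
      Real.log_sqrt hS.le]
    rw [hc]
    ring
  simp only [hfun]
  have hchange : ∀ z : ℝ, z ≠ β₀ →
      (a - 1) * ((z - β₀) / σ ^ 2) / (c + (z - β₀) ^ 2 / (2 * σ ^ 2))
        = ((a - 1) / σ ^ 2) * (c / (z - β₀) + (z - β₀) / (2 * σ ^ 2))⁻¹ := by
    intro z hz
    have h1 : z - β₀ ≠ 0 := sub_ne_zero.mpr hz
    have hD : c + (z - β₀) ^ 2 / (2 * σ ^ 2)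
        = (c / (z - β₀) + (z - β₀) / (2 * σ ^ 2)) * (z - β₀) := by
      field_simp
    rw [show (a - 1) * ((z - β₀) / σ ^ 2) = ((a - 1) / σ ^ 2) * (z - β₀) by ring, hD,
      mul_div_mul_right _ _ h1, div_eq_mul_inv]
  rw [cocompact_eq_atBot_atTop, tendsto_sup]
  have hsub_top : Tendsto (fun z : ℝ => z - β₀) atTop atTop :=
    tendsto_atTop_add_const_right atTop (-β₀) tendsto_id
  have hsub_bot : Tendsto (fun z : ℝ => z - β₀) atBot atBot :=
    tendsto_atBot_add_const_right atBot (-β₀) tendsto_id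
  constructor
  · -- atBot
    have hc0 : Tendsto (fun z : ℝ => c / (z - β₀)) atBot (nhds 0) := by
      simp only [div_eq_mul_inv]
      have := (inv_tendsto_atBot' hsub_bot).const_mul c
      simpa using this
    have hdenom : Tendsto (fun z : ℝ => c / (z - β₀) + (z - β₀) / (2 * σ ^ 2))
        atBot atBot :=
      hc0.add_atBot (hsub_bot.atBot_div_const (by positivity))
    have hmain : Tendsto (fun z : ℝ =>
        ((a - 1) / σ ^ 2) * (c / (z - β₀) + (z - β₀) / (2 * σ ^ 2))⁻¹) atBot (nhds 0) := by
      have := (inv_tendsto_atBot' hdenom).const_mul ((a - 1) / σ ^ 2)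
      simpa using this
    refine Tendsto.congr' ?_ hmain
    filter_upwards [eventually_lt_atBot β₀] with z hz
    exact (hchange z (ne_of_lt hz)).symm
  · -- atTop
    have hdenom : Tendsto (fun z : ℝ => c / (z - β₀) + (z - β₀) / (2 * σ ^ 2))
        atTop atTop :=
      (tendsto_const_nhds.div_atTop hsub_top).add_atTop
        (hsub_top.atTop_div_const (by positivity))
    have hmain : Tendsto (fun z : ℝ =>
        ((a - 1) / σ ^ 2) * (c / (z - β₀) + (z - β₀) / (2 * σ ^ 2))⁻¹) atTop (nhds 0) := by
      have := hdenom.inv_tendsto_atTop.const_mul ((a - 1) / σ ^ 2)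
      simpa using this
    refine Tendsto.congr' ?_ hmain
    filter_upwards [eventually_gt_atTop β₀] with z hz
    exact (hchange z (ne_of_gt hz)).symm
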